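/- Let R be a commutative ring, S a multiplicative subset, M an R-module, and f : M → F an S-flat preenvelope of M. Then the localized map f_S : M_S → F_S is a flat preenvelope of M_S in the category of R_S-modules. -/

import Mathlib

/-- If `f : M → F` is an `S`-flat preenvelope of the `R`-module `M`
(where an `R`-module `N` is `S`-flat when `N_S` is flat over `R_S`), then the localized
map `f_S : M_S → F_S` is a flat preenvelope of `M_S` as `R_S`-modules. -/
theorem stmt6 {R : Type u} [CommRing R] (S : Submonoid R)
    {M F : Type u} [AddCommGroup M] [Module R M] [AddCommGroup F] [Module R F]
    (f : M →ₗ[R] F)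
    (hF : Module.Flat (Localization S) (LocalizedModule S F))
    (hpre : ∀ (N : Type u) [AddCommGroup N] [Module R N],
      Module.Flat (Localization S) (LocalizedModule S N) →
      ∀ g : M →ₗ[R] N, ∃ h : F →ₗ[R] N, h ∘ₗ f = g) :
    ∀ (N : Type u) [AddCommGroup N] [Module (Localization S) N], Module.Flat (Localization S) N →
      ∀ g : LocalizedModule S M →ₗ[Localization S] N,
        ∃ h : LocalizedModule S F →ₗ[Localization S] N,
          ∀ x : LocalizedModule S M,
            h ((IsLocalizedModule.map S (LocalizedModule.mkLinearMap S M)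
              (LocalizedModule.mkLinearMap S F) f) x) = g x := by
  intro N _ _ hN g
  letI : Module R N := Module.compHom N (algebraMap R (Localization S))
  haveI : IsScalarTower R (Localization S) N := IsScalarTower.of_compHom R (Localization S) N
  haveI hloc : IsLocalizedModule S (LinearMap.id : N →ₗ[R] N) :=
    isLocalizedModule_id S N (Localization S)
  let e : LocalizedModule S N ≃ₗ[R] N := IsLocalizedModule.iso S (LinearMap.id : N →ₗ[R] N)
  let e' : LocalizedModule S N ≃ₗ[Localization S] N :=
    LinearEquiv.ofLinear
      (LinearMap.extendScalarsOfIsLocalization S (Localization S) e.toLinearMap)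
      (LinearMap.extendScalarsOfIsLocalization S (Localization S) e.symm.toLinearMap)
      (by ext x; exact e.apply_symm_apply x)
      (by ext x; exact e.symm_apply_apply x)
  haveI : Module.Flat (Localization S) (LocalizedModule S N) :=
    Module.Flat.of_linearEquiv e'
  obtain ⟨h₀, hh₀⟩ := hpre N this ((g.restrictScalars R) ∘ₗ LocalizedModule.mkLinearMap S M)
  let h₁ : LocalizedModule S F →ₗ[R] N :=
    IsLocalizedModule.lift S (LocalizedModule.mkLinearMap S F) h₀ hloc.map_units
  refine ⟨LinearMap.extendScalarsOfIsLocalization S (Localization S) h₁, fun x => ?_⟩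
  have key : ∀ m : M,
      h₁ ((IsLocalizedModule.map S (LocalizedModule.mkLinearMap S M)
        (LocalizedModule.mkLinearMap S F) f) (LocalizedModule.mkLinearMap S M m)) =
      g (LocalizedModule.mkLinearMap S M m) := by
    intro m
    have h2 := LinearMap.congr_fun (IsLocalizedModule.map_comp S (LocalizedModule.mkLinearMap S M)
      (LocalizedModule.mkLinearMap S F) f) m
    rw [LinearMap.comp_apply] at h2
    rw [h2]
    have h3 : h₁ ((LocalizedModule.mkLinearMap S F ∘ₗ f) m) = h₀ (f m) :=
      LinearMap.congr_fun (IsLocalizedModule.lift_comp S (LocalizedModule.mkLinearMap S F) h₀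
        hloc.map_units) (f m)
    rw [h3]
    exact LinearMap.congr_fun hh₀ m
  induction x using LocalizedModule.induction_on with
  | h m s =>
    have hinj := ((Module.End.isUnit_iff _).mp (hloc.map_units s)).injective
    apply hinj
    simp only [Module.algebraMap_end_apply]
    rw [← LinearMap.map_smul_of_tower, ← LinearMap.map_smul, ← LinearMap.map_smul_of_tower g]
    have hms : (s : R) • (LocalizedModule.mk m s : LocalizedModule S M) =
        LocalizedModule.mkLinearMap S M m := by
      rw [LocalizedModule.smul'_mk, ← Submonoid.smul_def, LocalizedModule.mk_cancel]
      rfl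
    rw [hms]
    exact key m
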